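/- Two closed curves γ₀ and γ₁ in ℝ² \ {a} are homotopic (through closed curves avoiding a) if and only if they have the same winding number about a. -/

import Mathlib

open Set Complex
set_option maxHeartbeats 1000000

-- membership in slitPlane for points near 1
lemma aux_mem_slitPlane {u : ℂ} (h : ‖u - 1‖ < 1) : u ∈ Complex.slitPlane := by
  rw [Complex.mem_slitPlane_iff]
  by_contra hc
  push_neg at hc
  obtain ⟨h1, h2⟩ := hc
  have hre : (u - 1).re = u.re - 1 := by simp
  have : |(u - 1).re| ≤ ‖u - 1‖ := Complex.abs_re_le_norm _
  have : 1 - u.re ≤ ‖u - 1‖ := by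
    rw [hre] at this
    calc 1 - u.re = |u.re - 1| := by rw [abs_of_nonpos (by linarith)]; ring
    _ ≤ _ := this
  linarith

lemma aux_ratio_slit {z w : ℂ} (h : ‖z - w‖ < ‖w‖) :
    z / w ∈ Complex.slitPlane ∧ z ≠ 0 ∧ w ≠ 0 := by
  have hw : w ≠ 0 := by
    intro hw0; rw [hw0] at h; simp at h
    exact absurd h (by simp [norm_nonneg])
  have hz : z ≠ 0 := by
    intro hz0; rw [hz0] at h; simp at h
  refine ⟨aux_mem_slitPlane ?_, hz, hw⟩
  have : z / w - 1 = (z - w) / w := by field_simp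
  rw [this, norm_div]
  rw [div_lt_one (norm_pos_iff.mpr hw)]
  exact h

-- continuity and lifting property of log of ratios
lemma aux_log_ratio {f g : ℝ → ℂ} {s : Set ℝ} (hf : ContinuousOn f s) (hg : ContinuousOn g s)
    (h : ∀ x ∈ s, ‖f x - g x‖ < ‖g x‖) :
    ContinuousOn (fun x => Complex.log (f x / g x)) s ∧
      ∀ x ∈ s, Complex.exp (Complex.log (f x / g x)) = f x / g x := by
  constructor
  · intro x hx
    have hs := aux_ratio_slit (h x hx)
    have hd : ContinuousWithinAt (fun y => f y / g y) s x := (hf x hx).div (hg x hx) hs.2.2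
    exact ContinuousAt.comp_continuousWithinAt (g := Complex.log)
      (f := fun y => f y / g y) (continuousAt_clog hs.1) hd
  · intro x hx
    have hs := aux_ratio_slit (h x hx)
    exact Complex.exp_log (div_ne_zero hs.2.1 hs.2.2)

-- an integer-valued continuous function on [0,1] is constant
lemma aux_int_const {k : ℝ → ℝ} (hk : ContinuousOn k (Icc 0 1))
    (hint : ∀ x ∈ Icc (0:ℝ) 1, ∃ n : ℤ, k x = n) :
    ∀ x ∈ Icc (0:ℝ) 1, ∀ y ∈ Icc (0:ℝ) 1, k x = k y := by
  have key : ∀ x ∈ Icc (0:ℝ) 1, ∀ y ∈ Icc (0:ℝ) 1, x ≤ y → k x = k y := by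
    intro x hx y hy hxy
    by_contra hne
    obtain ⟨m, hm⟩ := hint x hx
    obtain ⟨m', hm'⟩ := hint y hy
    have hsub : Icc x y ⊆ Icc (0:ℝ) 1 := Icc_subset_Icc hx.1 hy.2
    have hks : ContinuousOn k (Icc x y) := hk.mono hsub
    rcases lt_or_gt_of_ne hne with h | h
    · have : k x + 1/2 ∈ Icc (k x) (k y) := by
        constructor
        · linarith
        · rw [hm, hm'] at h ⊢
          have : m < m' := by exact_mod_cast h
          have : (m:ℝ) + 1 ≤ m' := by exact_mod_cast this
          linarith
      obtain ⟨z, hz, hkz⟩ := intermediate_value_Icc hxy hks this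
      obtain ⟨n, hn⟩ := hint z (hsub hz)
      rw [hn, hm] at hkz
      have : (2*n : ℝ) = 2*m + 1 := by linarith
      have : (2*n : ℤ) = 2*m + 1 := by exact_mod_cast this
      omega
    · have : k x - 1/2 ∈ Icc (k y) (k x) := by
        constructor
        · rw [hm, hm'] at h ⊢
          have : m' < m := by exact_mod_cast h
          have : (m':ℝ) + 1 ≤ m := by exact_mod_cast this
          linarith
        · linarith
      obtain ⟨z, hz, hkz⟩ := intermediate_value_Icc' hxy hks this
      obtain ⟨n, hn⟩ := hint z (hsub hz)
      rw [hn, hm] at hkz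
      have : (2*n : ℝ) = 2*m - 1 := by linarith
      have : (2*n : ℤ) = 2*m - 1 := by exact_mod_cast this
      omega
  intro x hx y hy
  rcases le_total x y with h | h
  · exact key x hx y hy h
  · exact (key y hy x hx h).symm

-- two continuous lifts through exp differ by a constant on [0,1]
lemma aux_lift_unique {g₁ g₂ : ℝ → ℂ} (h₁ : ContinuousOn g₁ (Icc 0 1))
    (h₂ : ContinuousOn g₂ (Icc 0 1))
    (h : ∀ x ∈ Icc (0:ℝ) 1, Complex.exp (g₁ x) = Complex.exp (g₂ x)) :
    ∀ x ∈ Icc (0:ℝ) 1, ∀ y ∈ Icc (0:ℝ) 1, g₁ x - g₂ x = g₁ y - g₂ y := by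
  have hint : ∀ x ∈ Icc (0:ℝ) 1, ∃ n : ℤ, g₁ x - g₂ x = n * (2 * Real.pi * Complex.I) := by
    intro x hx
    have := (Complex.exp_eq_exp_iff_exists_int).mp (h x hx)
    obtain ⟨n, hn⟩ := this
    exact ⟨n, by linear_combination hn⟩
  set k : ℝ → ℝ := fun x => (g₁ x - g₂ x).im / (2 * Real.pi) with hkdef
  have hkc : ContinuousOn k (Icc 0 1) := by
    apply ContinuousOn.div_const
    exact (Complex.continuous_im.comp_continuousOn (h₁.sub h₂))
  have hkint : ∀ x ∈ Icc (0:ℝ) 1, ∃ n : ℤ, k x = n := by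
    intro x hx
    obtain ⟨n, hn⟩ := hint x hx
    refine ⟨n, ?_⟩
    have him : (g₁ x - g₂ x).im = n * (2 * Real.pi) := by
      rw [hn]; simp
    rw [hkdef]; simp only [him]
    field_simp
  have hval : ∀ x ∈ Icc (0:ℝ) 1, g₁ x - g₂ x = (k x : ℂ) * (2 * Real.pi * Complex.I) := by
    intro x hx
    obtain ⟨n, hn⟩ := hint x hx
    obtain ⟨n', hn'⟩ := hkint x hx
    have : (n' : ℝ) = n := by
      have him : (g₁ x - g₂ x).im = n * (2 * Real.pi) := by rw [hn]; simp
      have : k x = n := by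
        rw [hkdef]; simp only [him]; field_simp
      rw [hn'] at this; exact_mod_cast this
    rw [hn', this, hn]
    push_cast; ring
  intro x hx y hy
  rw [hval x hx, hval y hy, aux_int_const hkc hkint x hx y hy]

-- existence of a continuous logarithm along a path
lemma aux_exists_lift {f : ℝ → ℂ} (hf : ContinuousOn f (Icc 0 1))
    (hne : ∀ x ∈ Icc (0:ℝ) 1, f x ≠ 0) :
    ∃ g : ℝ → ℂ, ContinuousOn g (Icc 0 1) ∧ ∀ x ∈ Icc (0:ℝ) 1, Complex.exp (g x) = f x := by
  -- minimum modulus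
  obtain ⟨p, hp, hmin⟩ := (isCompact_Icc (a := (0:ℝ)) (b := 1)).exists_isMinOn
    (nonempty_Icc.mpr zero_le_one) (continuous_norm.comp_continuousOn hf)
  set m : ℝ := ‖f p‖ with hm
  have hmpos : 0 < m := by
    rw [hm]; exact norm_pos_iff.mpr (hne p hp)
  have hmle : ∀ x ∈ Icc (0:ℝ) 1, m ≤ ‖f x‖ := fun x hx => hmin hx
  -- uniform continuity
  have huc := (isCompact_Icc (a := (0:ℝ)) (b := 1)).uniformContinuousOn_of_continuous hf
  rw [Metric.uniformContinuousOn_iff] at huc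
  obtain ⟨δ, hδpos, hδ⟩ := huc m hmpos
  obtain ⟨N, hN⟩ := exists_nat_gt (1/δ)
  have hNpos : 0 < (N:ℝ) := lt_trans (by positivity) hN
  have hstep : (1:ℝ)/N < δ := by
    rw [div_lt_iff₀ hNpos]
    rw [div_lt_iff₀ hδpos] at hN
    calc (1:ℝ) < N * δ := by linarith [hN]
    _ = δ * N := by ring
  have hclose : ∀ x ∈ Icc (0:ℝ) 1, ∀ y ∈ Icc (0:ℝ) 1, |x - y| ≤ 1/N →
      ‖f x - f y‖ < ‖f y‖ := by
    intro x hx y hy hxy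
    have : dist (f x) (f y) < m := hδ x hx y hy (lt_of_le_of_lt (by rwa [Real.dist_eq]) hstep)
    calc ‖f x - f y‖ = dist (f x) (f y) := by rw [Complex.dist_eq]
    _ < m := this
    _ ≤ ‖f y‖ := hmle y hy
  -- inductive construction
  have main : ∀ k : ℕ, k ≤ N → ∃ g : ℝ → ℂ, ContinuousOn g (Icc 0 ((k:ℝ)/N)) ∧
      ∀ x ∈ Icc (0:ℝ) ((k:ℝ)/N), Complex.exp (g x) = f x := by
    intro k
    induction k with
    | zero =>
      intro _
      refine ⟨fun _ => Complex.log (f 0), continuousOn_const, ?_⟩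
      intro x hx
      simp only [Nat.cast_zero, zero_div] at hx
      have : x = 0 := le_antisymm hx.2 hx.1
      rw [this, Complex.exp_log (hne 0 (left_mem_Icc.mpr zero_le_one))]
    | succ k ih =>
      intro hk1
      obtain ⟨g, hgc, hge⟩ := ih (le_of_lt (Nat.lt_of_succ_le hk1))
      set c : ℝ := (k:ℝ)/N with hc
      set b : ℝ := ((k:ℝ)+1)/N with hb
      have hcb : c ≤ b := by
        rw [hc, hb]; gcongr; linarith
      have hbN : b ≤ 1 := by
        rw [hb, div_le_one hNpos]; exact_mod_cast hk1
      have hc0 : (0:ℝ) ≤ c := by positivity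
      have hcI : c ∈ Icc (0:ℝ) 1 := ⟨hc0, le_trans hcb hbN⟩
      have hsub : Icc c b ⊆ Icc (0:ℝ) 1 := Icc_subset_Icc hc0 hbN
      have hcl : ∀ x ∈ Icc c b, ‖f x - f c‖ < ‖f c‖ := by
        intro x hx
        apply hclose x (hsub hx) c hcI
        have hbc : b - c = 1/(N:ℝ) := by rw [hb, hc]; ring
        have habs : |x - c| = x - c := abs_of_nonneg (by linarith [hx.1])
        rw [habs]; linarith [hx.2]
      obtain ⟨hlrc, hlre⟩ := aux_log_ratio (hf.mono hsub)
        (continuousOn_const (c := f c)) hcl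
      set g' : ℝ → ℂ := fun x => if x ≤ c then g x else g c + Complex.log (f x / f c)
        with hg'
      have heqc : ∀ x ∈ Icc c b, g' x = g c + Complex.log (f x / f c) := by
        intro x hx
        rw [hg']
        by_cases h : x ≤ c
        · have hxc : x = c := le_antisymm h hx.1
          simp only [if_pos h]
          rw [hxc, div_self (hne c hcI), Complex.log_one, add_zero]
        · simp only [if_neg h]
      have heqg : ∀ x ∈ Icc (0:ℝ) c, g' x = g x := by
        intro x hx
        rw [hg']; simp only [if_pos hx.2]
      have hg'c : ContinuousOn g' (Icc 0 b) := by
        rw [← Icc_union_Icc_eq_Icc hc0 hcb]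
        intro x hx
        have h1 : ContinuousWithinAt g' (Icc 0 c) x := by
          rcases mem_union _ _ _ |>.mp hx with h | h
          · exact ((hgc.congr heqg) x h).mono subset_rfl
          · by_cases hxc : x ∈ Icc (0:ℝ) c
            · exact (hgc.congr heqg) x hxc
            · exact continuousWithinAt_of_notMem_closure
                (by rwa [isClosed_Icc.closure_eq])
        have h2 : ContinuousWithinAt g' (Icc c b) x := by
          by_cases hxc : x ∈ Icc c b
          · exact (((continuousOn_const (c := g c)).add hlrc).congr
              (fun y hy => heqc y hy)) x hxc
          · exact continuousWithinAt_of_notMem_closure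
              (by rwa [isClosed_Icc.closure_eq])
        exact h1.union h2
      refine ⟨g', ?_, ?_⟩
      · have hbb : (((k+1:ℕ)):ℝ)/N = b := by rw [hb]; push_cast; ring
        rw [hbb]; exact hg'c
      · intro x hx
        have hx' : x ∈ Icc (0:ℝ) b := by
          rw [hb]
          convert hx using 2
          push_cast; ring
        rcases le_or_gt x c with h | h
        · rw [heqg x ⟨hx'.1, h⟩]
          exact hge x ⟨hx'.1, h⟩
        · have hxcb : x ∈ Icc c b := ⟨le_of_lt h, hx'.2⟩
          rw [heqc x hxcb, Complex.exp_add, hge c ⟨hc0, le_refl c⟩, hlre x hxcb]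
          rw [mul_comm]; exact div_mul_cancel₀ (f x) (hne c hcI)
  obtain ⟨g, hgc, hge⟩ := main N (le_refl N)
  have : ((N:ℝ))/N = 1 := div_self (ne_of_gt hNpos)
  rw [this] at hgc hge
  exact ⟨g, hgc, hge⟩

-- close loops have lifts with the same endpoint difference
lemma aux_close_loops {f₀ f₁ g₀ g₁ : ℝ → ℂ}
    (hf₀ : ContinuousOn f₀ (Icc 0 1)) (hf₁ : ContinuousOn f₁ (Icc 0 1))
    (hg₀c : ContinuousOn g₀ (Icc 0 1)) (hg₁c : ContinuousOn g₁ (Icc 0 1))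
    (he₀ : ∀ x ∈ Icc (0:ℝ) 1, Complex.exp (g₀ x) = f₀ x)
    (he₁ : ∀ x ∈ Icc (0:ℝ) 1, Complex.exp (g₁ x) = f₁ x)
    (hloop₀ : f₀ 0 = f₀ 1) (hloop₁ : f₁ 0 = f₁ 1)
    (hclose : ∀ x ∈ Icc (0:ℝ) 1, ‖f₁ x - f₀ x‖ < ‖f₀ x‖) :
    g₀ 1 - g₀ 0 = g₁ 1 - g₁ 0 := by
  obtain ⟨hlc, hle⟩ := aux_log_ratio hf₁ hf₀ hclose
  set h : ℝ → ℂ := fun x => g₀ x + Complex.log (f₁ x / f₀ x) with hh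
  have hhc : ContinuousOn h (Icc 0 1) := hg₀c.add hlc
  have hhe : ∀ x ∈ Icc (0:ℝ) 1, Complex.exp (h x) = Complex.exp (g₁ x) := by
    intro x hx
    have hne₀ : f₀ x ≠ 0 := (aux_ratio_slit (hclose x hx)).2.2
    rw [hh, he₁ x hx]
    simp only
    rw [Complex.exp_add, he₀ x hx, hle x hx, mul_comm]
    exact div_mul_cancel₀ (f₁ x) hne₀
  have h0 : (0:ℝ) ∈ Icc (0:ℝ) 1 := left_mem_Icc.mpr zero_le_one
  have h1 : (1:ℝ) ∈ Icc (0:ℝ) 1 := right_mem_Icc.mpr zero_le_one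
  have := aux_lift_unique hhc hg₁c hhe 1 h1 0 h0
  have hratio : f₁ 1 / f₀ 1 = f₁ 0 / f₀ 0 := by rw [← hloop₀, ← hloop₁]
  have hh1 : h 1 - h 0 = g₀ 1 - g₀ 0 := by
    rw [hh]; simp only; rw [hratio]; ring
  have hfin : g₁ 1 - g₁ 0 = h 1 - h 0 := by linear_combination -this
  rw [hfin, hh1]

-- polar closedness: equal endpoints give equal radii and integer angle difference
lemma aux_polar_endpoint {r0 r1 t0 t1 : ℝ} (h0 : 0 < r0) (h1 : 0 < r1)
    (h : (r0:ℂ) * Complex.exp (2 * Real.pi * Complex.I * (t0:ℂ))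
       = (r1:ℂ) * Complex.exp (2 * Real.pi * Complex.I * (t1:ℂ))) :
    r0 = r1 ∧ ∃ n : ℤ, t1 - t0 = n := by
  have habs : ∀ (t : ℝ), ‖Complex.exp (2 * Real.pi * Complex.I * (t:ℂ))‖ = 1 := by
    intro t
    have : (2 * Real.pi * Complex.I * (t:ℂ)) = ((2 * Real.pi * t : ℝ) : ℂ) * Complex.I := by
      push_cast; ring
    rw [this, Complex.norm_exp_ofReal_mul_I]
  have hr : r0 = r1 := by
    have := congrArg (‖·‖) h
    rw [norm_mul, norm_mul, habs, habs, Complex.norm_real, Complex.norm_real, Real.norm_eq_abs, Real.norm_eq_abs,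
      mul_one, mul_one, abs_of_pos h0, abs_of_pos h1] at this
    exact this
  refine ⟨hr, ?_⟩
  rw [hr] at h
  have hr1 : ((r1:ℂ)) ≠ 0 := by exact_mod_cast ne_of_gt h1
  have hexp := mul_left_cancel₀ hr1 h
  obtain ⟨n, hn⟩ := Complex.exp_eq_exp_iff_exists_int.mp hexp
  refine ⟨-n, ?_⟩
  have hπ : (2 * Real.pi * Complex.I : ℂ) ≠ 0 := by
    simp [Complex.I_ne_zero, Real.pi_ne_zero]
  have : (2 * Real.pi * Complex.I : ℂ) * (t0:ℂ) =
      (2 * Real.pi * Complex.I : ℂ) * ((t1:ℂ) + n) := by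
    rw [hn]; push_cast; ring
  have ht := mul_left_cancel₀ hπ this
  have : (t0:ℂ) = ((t1 + n : ℝ):ℂ) := by rw [ht]; push_cast; ring
  have := Complex.ofReal_inj.mp this
  push_cast
  linarith

-- explicit polar lift
lemma aux_polar_lift {r θ : ℝ → ℝ} (hr : ContinuousOn r (Icc 0 1))
    (hθ : ContinuousOn θ (Icc 0 1)) (hpos : ∀ x ∈ Icc (0:ℝ) 1, 0 < r x) :
    ContinuousOn (fun x => ((Real.log (r x) : ℂ) + 2 * Real.pi * Complex.I * (θ x : ℂ)))
      (Icc 0 1) ∧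
    ∀ x ∈ Icc (0:ℝ) 1,
      Complex.exp ((Real.log (r x) : ℂ) + 2 * Real.pi * Complex.I * (θ x : ℂ))
        = (r x : ℂ) * Complex.exp (2 * Real.pi * Complex.I * (θ x : ℂ)) := by
  constructor
  · apply ContinuousOn.add
    · apply Complex.continuous_ofReal.comp_continuousOn
      intro x hx
      exact (Real.continuousAt_log (ne_of_gt (hpos x hx))).comp_continuousWithinAt (hr x hx)
    · exact (continuousOn_const).mul (Complex.continuous_ofReal.comp_continuousOn hθ)
  · intro x hx
    rw [Complex.exp_add, ← Complex.ofReal_exp, Real.exp_log (hpos x hx)]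
/-- Two closed curves `γ₀` and `γ₁` in `ℝ² \ {a}` are homotopic (through
closed curves avoiding `a`) if and only if they have the same winding number about `a`.

Each curve is given with a polar decomposition `γⱼ = a + rⱼ·exp(2πiθⱼ)` with continuous
`rⱼ : [0,1] → ℝ_{>0}` and `θⱼ : [0,1] → ℝ`; the winding number of `γⱼ` about `a` is
`θⱼ(1) - θⱼ(0)`. A homotopy is a continuous `H : [0,1]² → ℂ \ {a}` with `H(·,0) = γ₀`,
`H(·,1) = γ₁`, and `H(0,t) = H(1,t)` for all `t`. -/
theorem closed_curves_homotopic_iff_same_winding_number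
    (a : ℂ) (γ₀ γ₁ : ℝ → ℂ) (r₀ r₁ θ₀ θ₁ : ℝ → ℝ)
    (hγ₀ : ContinuousOn γ₀ (Icc 0 1)) (hγ₁ : ContinuousOn γ₁ (Icc 0 1))
    (hc₀ : γ₀ 0 = γ₀ 1) (hc₁ : γ₁ 0 = γ₁ 1)
    (hr₀ : ContinuousOn r₀ (Icc 0 1)) (hr₁ : ContinuousOn r₁ (Icc 0 1))
    (hrpos₀ : ∀ t ∈ Icc (0:ℝ) 1, 0 < r₀ t) (hrpos₁ : ∀ t ∈ Icc (0:ℝ) 1, 0 < r₁ t)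
    (hθ₀ : ContinuousOn θ₀ (Icc 0 1)) (hθ₁ : ContinuousOn θ₁ (Icc 0 1))
    (hpolar₀ : ∀ t ∈ Icc (0:ℝ) 1,
      γ₀ t = a + (r₀ t : ℂ) * Complex.exp (2 * Real.pi * Complex.I * (θ₀ t : ℂ)))
    (hpolar₁ : ∀ t ∈ Icc (0:ℝ) 1,
      γ₁ t = a + (r₁ t : ℂ) * Complex.exp (2 * Real.pi * Complex.I * (θ₁ t : ℂ))) :
    (∃ H : ℝ → ℝ → ℂ,
      ContinuousOn (fun p : ℝ × ℝ => H p.1 p.2) (Icc 0 1 ×ˢ Icc 0 1) ∧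
      (∀ x ∈ Icc (0:ℝ) 1, H x 0 = γ₀ x) ∧
      (∀ x ∈ Icc (0:ℝ) 1, H x 1 = γ₁ x) ∧
      (∀ t ∈ Icc (0:ℝ) 1, H 0 t = H 1 t) ∧
      (∀ x ∈ Icc (0:ℝ) 1, ∀ t ∈ Icc (0:ℝ) 1, H x t ≠ a)) ↔
    θ₀ 1 - θ₀ 0 = θ₁ 1 - θ₁ 0 := by
  have h0I : (0:ℝ) ∈ Icc (0:ℝ) 1 := left_mem_Icc.mpr zero_le_one
  have h1I : (1:ℝ) ∈ Icc (0:ℝ) 1 := right_mem_Icc.mpr zero_le_one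
  have hπ : (2 * Real.pi * Complex.I : ℂ) ≠ 0 := by
    simp [Complex.I_ne_zero, Real.pi_ne_zero]
  -- endpoint facts for each curve
  have hend₀ : r₀ 0 = r₀ 1 ∧ ∃ n : ℤ, θ₀ 1 - θ₀ 0 = n := by
    apply aux_polar_endpoint (hrpos₀ 0 h0I) (hrpos₀ 1 h1I)
    have := hc₀
    rw [hpolar₀ 0 h0I, hpolar₀ 1 h1I] at this
    exact add_left_cancel this
  have hend₁ : r₁ 0 = r₁ 1 ∧ ∃ n : ℤ, θ₁ 1 - θ₁ 0 = n := by
    apply aux_polar_endpoint (hrpos₁ 0 h0I) (hrpos₁ 1 h1I)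
    have := hc₁
    rw [hpolar₁ 0 h0I, hpolar₁ 1 h1I] at this
    exact add_left_cancel this
  constructor
  · -- homotopy implies same winding number
    rintro ⟨H, Hcont, H0, H1, Hper, Hne⟩
    set K : Set (ℝ × ℝ) := Icc 0 1 ×ˢ Icc 0 1 with hK
    have hKc : IsCompact K := isCompact_Icc.prod isCompact_Icc
    have hKne : K.Nonempty := ⟨(0,0), ⟨h0I, h0I⟩⟩
    have hFc : ContinuousOn (fun p : ℝ × ℝ => H p.1 p.2 - a) K := Hcont.sub continuousOn_const
    obtain ⟨p₀, hp₀, hmin⟩ := hKc.exists_isMinOn hKne (continuous_norm.comp_continuousOn hFc)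
    set m : ℝ := ‖H p₀.1 p₀.2 - a‖ with hm
    have hmpos : 0 < m := by
      rw [hm]
      exact norm_pos_iff.mpr (sub_ne_zero.mpr (Hne p₀.1 hp₀.1 p₀.2 hp₀.2))
    have hmle : ∀ x ∈ Icc (0:ℝ) 1, ∀ t ∈ Icc (0:ℝ) 1, m ≤ ‖H x t - a‖ := by
      intro x hx t ht
      exact hmin (Set.mk_mem_prod hx ht)
    have huc := hKc.uniformContinuousOn_of_continuous Hcont
    rw [Metric.uniformContinuousOn_iff] at huc
    obtain ⟨δ, hδpos, hδ⟩ := huc m hmpos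
    -- continuity of the slices
    have hslice : ∀ t ∈ Icc (0:ℝ) 1, ContinuousOn (fun x => H x t - a) (Icc 0 1) := by
      intro t ht
      have hmap : MapsTo (fun x : ℝ => ((x, t) : ℝ × ℝ)) (Icc 0 1) K :=
        fun x hx => Set.mk_mem_prod hx ht
      have hxt : ContinuousOn (fun x : ℝ => ((x, t) : ℝ × ℝ)) (Icc 0 1) :=
        (continuous_id.prodMk continuous_const).continuousOn
      have hcmp : ContinuousOn ((fun p : ℝ × ℝ => H p.1 p.2) ∘ fun x : ℝ => (x, t))
          (Icc 0 1) := Hcont.comp hxt hmap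
      exact (ContinuousOn.sub hcmp continuousOn_const :)
    -- choose lifts for every time slice
    have hL : ∀ t : ℝ, ∃ g : ℝ → ℂ, t ∈ Icc (0:ℝ) 1 →
        (ContinuousOn g (Icc 0 1) ∧ ∀ x ∈ Icc (0:ℝ) 1, Complex.exp (g x) = H x t - a) := by
      intro t
      by_cases ht : t ∈ Icc (0:ℝ) 1
      · obtain ⟨g, hgc, hge⟩ := aux_exists_lift (hslice t ht)
          (fun x hx => sub_ne_zero.mpr (Hne x hx t ht))
        exact ⟨g, fun _ => ⟨hgc, hge⟩⟩
      · exact ⟨0, fun h => absurd h ht⟩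
    choose G hG using hL
    set W : ℝ → ℂ := fun t => G t 1 - G t 0 with hW
    -- local constancy of W
    have hstep : ∀ s ∈ Icc (0:ℝ) 1, ∀ t ∈ Icc (0:ℝ) 1, |s - t| < δ → W s = W t := by
      intro s hs t ht hst
      obtain ⟨hgtc, hgte⟩ := hG t ht
      obtain ⟨hgsc, hgse⟩ := hG s hs
      have := aux_close_loops (hslice t ht) (hslice s hs) hgtc hgsc hgte hgse
        (by rw [Hper t ht]) (by rw [Hper s hs]) ?_
      · rw [hW]; simp only; rw [this]
      · intro x hx
        have hdist : dist ((x,s) : ℝ × ℝ) ((x,t) : ℝ × ℝ) < δ := by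
          rw [Prod.dist_eq]
          simp only [dist_self]
          rw [max_eq_right dist_nonneg, Real.dist_eq]
          exact hst
        have := hδ (x,s) (Set.mk_mem_prod hx hs) (x,t) (Set.mk_mem_prod hx ht) hdist
        calc ‖(H x s - a) - (H x t - a)‖ = dist (H x s) (H x t) := by
              rw [Complex.dist_eq]; ring_nf
        _ < m := this
        _ ≤ ‖H x t - a‖ := hmle x hx t ht
    -- chain from 0 to 1
    obtain ⟨N, hN⟩ := exists_nat_gt (1/δ)
    have hNpos : 0 < (N:ℝ) := lt_trans (by positivity) hN
    have hstepN : (1:ℝ)/N < δ := by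
      rw [div_lt_iff₀ hNpos]
      rw [div_lt_iff₀ hδpos] at hN
      nlinarith
    have hchain : ∀ k : ℕ, k ≤ N → W ((k:ℝ)/N) = W 0 := by
      intro k
      induction k with
      | zero => intro _; norm_num
      | succ k ih =>
        intro hk1
        have hk := le_of_lt (Nat.lt_of_succ_le hk1)
        have hmem : ∀ j : ℕ, j ≤ N → ((j:ℝ)/N) ∈ Icc (0:ℝ) 1 := by
          intro j hj
          constructor
          · positivity
          · rw [div_le_one hNpos]; exact_mod_cast hj
        have h1 : (((k+1:ℕ)):ℝ)/N ∈ Icc (0:ℝ) 1 := hmem (k+1) hk1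
        have h2 : ((k:ℝ))/N ∈ Icc (0:ℝ) 1 := hmem k hk
        have hd : |(((k+1:ℕ)):ℝ)/N - (k:ℝ)/N| < δ := by
          have : (((k+1:ℕ)):ℝ)/N - (k:ℝ)/N = 1/N := by push_cast; ring
          rw [this, abs_of_pos (by positivity)]
          exact hstepN
        rw [hstep _ h1 _ h2 hd]
        exact ih hk
    have hW01 : W 1 = W 0 := by
      have := hchain N (le_refl N)
      rwa [div_self (ne_of_gt hNpos)] at this
    -- compute W 0 and W 1 via explicit polar lifts
    obtain ⟨hl₀c, hl₀e⟩ := aux_polar_lift hr₀ hθ₀ hrpos₀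
    obtain ⟨hl₁c, hl₁e⟩ := aux_polar_lift hr₁ hθ₁ hrpos₁
    have hG0 := hG 0 h0I
    have hG1 := hG 1 h1I
    have hslice0 : ∀ x ∈ Icc (0:ℝ) 1,
        H x 0 - a = (r₀ x : ℂ) * Complex.exp (2 * Real.pi * Complex.I * (θ₀ x : ℂ)) := by
      intro x hx
      rw [H0 x hx, hpolar₀ x hx, add_sub_cancel_left]
    have hslice1 : ∀ x ∈ Icc (0:ℝ) 1,
        H x 1 - a = (r₁ x : ℂ) * Complex.exp (2 * Real.pi * Complex.I * (θ₁ x : ℂ)) := by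
      intro x hx
      rw [H1 x hx, hpolar₁ x hx, add_sub_cancel_left]
    have hW0 : W 0 = 2 * Real.pi * Complex.I * ((θ₀ 1 - θ₀ 0 : ℝ) : ℂ) := by
      have hueq : ∀ x ∈ Icc (0:ℝ) 1, Complex.exp (G 0 x) =
          Complex.exp ((Real.log (r₀ x) : ℂ) + 2 * Real.pi * Complex.I * (θ₀ x : ℂ)) := by
        intro x hx
        rw [hG0.2 x hx, hl₀e x hx, hslice0 x hx]
      have := aux_lift_unique hG0.1 hl₀c hueq 1 h1I 0 h0I
      have hval : W 0 = ((Real.log (r₀ 1) : ℂ) + 2 * Real.pi * Complex.I * (θ₀ 1 : ℂ))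
          - ((Real.log (r₀ 0) : ℂ) + 2 * Real.pi * Complex.I * (θ₀ 0 : ℂ)) := by
        rw [hW]; simp only; linear_combination this
      rw [hval, hend₀.1]
      push_cast
      ring
    have hW1 : W 1 = 2 * Real.pi * Complex.I * ((θ₁ 1 - θ₁ 0 : ℝ) : ℂ) := by
      have hueq : ∀ x ∈ Icc (0:ℝ) 1, Complex.exp (G 1 x) =
          Complex.exp ((Real.log (r₁ x) : ℂ) + 2 * Real.pi * Complex.I * (θ₁ x : ℂ)) := by
        intro x hx
        rw [hG1.2 x hx, hl₁e x hx, hslice1 x hx]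
      have := aux_lift_unique hG1.1 hl₁c hueq 1 h1I 0 h0I
      have hval : W 1 = ((Real.log (r₁ 1) : ℂ) + 2 * Real.pi * Complex.I * (θ₁ 1 : ℂ))
          - ((Real.log (r₁ 0) : ℂ) + 2 * Real.pi * Complex.I * (θ₁ 0 : ℂ)) := by
        rw [hW]; simp only; linear_combination this
      rw [hval, hend₁.1]
      push_cast
      ring
    have := hW01
    rw [hW0, hW1] at this
    have hfin := mul_left_cancel₀ hπ this
    have hfin' : (θ₁ 1 - θ₁ 0 : ℝ) = (θ₀ 1 - θ₀ 0 : ℝ) := by exact_mod_cast hfin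
    linarith
  · -- same winding number implies homotopic
    intro hwind
    obtain ⟨n, hn⟩ := hend₀.2
    refine ⟨fun x t => a + ((((1-t) * r₀ x + t * r₁ x : ℝ)) : ℂ) *
      Complex.exp (2 * Real.pi * Complex.I * (((1-t) * θ₀ x + t * θ₁ x : ℝ) : ℂ)), ?_, ?_, ?_, ?_, ?_⟩
    · -- continuity
      apply ContinuousOn.add continuousOn_const
      apply ContinuousOn.mul
      · apply Complex.continuous_ofReal.comp_continuousOn
        have c1 : ContinuousOn (fun p : ℝ × ℝ => r₀ p.1) (Icc 0 1 ×ˢ Icc 0 1) :=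
          hr₀.comp continuous_fst.continuousOn (fun p hp => hp.1)
        have c2 : ContinuousOn (fun p : ℝ × ℝ => r₁ p.1) (Icc 0 1 ×ˢ Icc 0 1) :=
          hr₁.comp continuous_fst.continuousOn (fun p hp => hp.1)
        exact ((continuousOn_const.sub continuous_snd.continuousOn).mul c1).add
          (continuous_snd.continuousOn.mul c2)
      · apply Complex.continuous_exp.comp_continuousOn
        apply ContinuousOn.mul continuousOn_const
        apply Complex.continuous_ofReal.comp_continuousOn
        have c1 : ContinuousOn (fun p : ℝ × ℝ => θ₀ p.1) (Icc 0 1 ×ˢ Icc 0 1) :=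
          hθ₀.comp continuous_fst.continuousOn (fun p hp => hp.1)
        have c2 : ContinuousOn (fun p : ℝ × ℝ => θ₁ p.1) (Icc 0 1 ×ˢ Icc 0 1) :=
          hθ₁.comp continuous_fst.continuousOn (fun p hp => hp.1)
        exact ((continuousOn_const.sub continuous_snd.continuousOn).mul c1).add
          (continuous_snd.continuousOn.mul c2)
    · intro x hx
      rw [hpolar₀ x hx]
      norm_num
    · intro x hx
      rw [hpolar₁ x hx]
      norm_num
    · intro t ht
      beta_reduce
      have hrr : ((1-t) * r₀ 0 + t * r₁ 0 : ℝ) = ((1-t) * r₀ 1 + t * r₁ 1 : ℝ) := by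
        rw [hend₀.1, hend₁.1]
      have hwd : ((1-t) * θ₀ 1 + t * θ₁ 1 : ℝ) = ((1-t) * θ₀ 0 + t * θ₁ 0 : ℝ) + n := by
        have h1 : θ₀ 1 = θ₀ 0 + n := by linarith [hn]
        have h2 : θ₁ 1 = θ₁ 0 + n := by
          have : θ₁ 1 - θ₁ 0 = n := by rw [← hwind]; exact hn
          linarith
        rw [h1, h2]; ring
      have hone : Complex.exp (2 * Real.pi * Complex.I * (n:ℂ)) = 1 := by
        have h2 := Complex.exp_int_mul_two_pi_mul_I n
        rw [← h2]; congr 1; push_cast; ring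
      have hexp : Complex.exp (2 * Real.pi * Complex.I *
            (((1-t) * θ₀ 0 + t * θ₁ 0 + (n:ℝ) : ℝ) : ℂ))
          = Complex.exp (2 * Real.pi * Complex.I * (((1-t) * θ₀ 0 + t * θ₁ 0 : ℝ) : ℂ)) := by
        push_cast
        rw [mul_add, Complex.exp_add, hone, mul_one]
      rw [hrr, hwd, hexp]
    · intro x hx t ht
      beta_reduce
      intro hcontra
      have h1 : ((((1-t) * r₀ x + t * r₁ x : ℝ)) : ℂ) *
          Complex.exp (2 * Real.pi * Complex.I * (((1-t) * θ₀ x + t * θ₁ x : ℝ) : ℂ)) = 0 :=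
        by linear_combination hcontra
      have hrpos : (0:ℝ) < (1-t) * r₀ x + t * r₁ x := by
        rcases eq_or_lt_of_le ht.1 with h | h
        · rw [← h]; simpa using hrpos₀ x hx
        · have h2 : 0 ≤ (1-t) * r₀ x :=
            mul_nonneg (by linarith [ht.2]) (le_of_lt (hrpos₀ x hx))
          have h3 : 0 < t * r₁ x := mul_pos h (hrpos₁ x hx)
          linarith
      rcases mul_eq_zero.mp h1 with h | h
      · exact absurd h (by exact_mod_cast ne_of_gt hrpos)
      · exact Complex.exp_ne_zero _ h
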